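/- Exclusivity: in the strict λ-calculus, it is not the case that both Γ₁; Ω₁; (Δ₁, x:C) ⊢ M : A and Γ₂; (Ω₂, x:C); Δ₂ ⊢ M : A are derivable; that is, no term can be typed both with x as a strict hypothesis and with x as an irrelevant hypothesis. -/
import Mathlib


/- A strict λ-calculus with strict (1), irrelevant (0) and unrestricted (u)
   function spaces, in locally nameless representation.  Contexts are finite
   sets of (variable name, type) declarations, split into three zones
   Γ (unrestricted); Ω (irrelevant); Δ (strict). -/

/-- Labels `k ::= 1 | 0 | u`. -/
inductive Lab : Type
  | one
  | zero
  | un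
deriving DecidableEq

/-- Types `A ::= a | A₁ →ᵏ A₂` over atomic types `a` (names in ℕ). -/
inductive Ty : Type
  | atom : ℕ → Ty
  | arr : Ty → Lab → Ty → Ty
deriving DecidableEq

/-- Terms `M ::= c | x | λxᵏ:A.M | M Nᵏ` (locally nameless: bound variables
    are de Bruijn indices, free variables/parameters are names). -/
inductive Tm : Type
  | const : ℕ → Tm
  | bvar : ℕ → Tm
  | fvar : ℕ → Tm
  | lam : Lab → Ty → Tm → Tm
  | app : Tm → Lab → Tm → Tm
deriving DecidableEq

/-- Opening: replace the bound variable `k` by the term `u`. -/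
def Tm.openRec (k : ℕ) (u : Tm) : Tm → Tm
  | .const c => .const c
  | .bvar i => if i = k then u else .bvar i
  | .fvar x => .fvar x
  | .lam l A M => .lam l A (Tm.openRec (k+1) u M)
  | .app M l N => .app (Tm.openRec k u M) l (Tm.openRec k u N)

/-- `M.open0 N` is the body `M` of an abstraction with its bound variable
    replaced by `N`; since free variables are named, this is
    capture-avoiding substitution of the bound variable by construction. -/
def Tm.open0 (M u : Tm) : Tm := Tm.openRec 0 u M

/-- A context zone: a finite set of declarations `x : A`. -/
abbrev Ctx : Type := Finset (ℕ × Ty)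

/-- The variables declared in a context. -/
def Ctx.names (Γ : Ctx) : Finset ℕ := Γ.image Prod.fst

/-- The typing judgment `Γ; Ω; Δ ⊢ M : A` of the strict λ-calculus,
    over a fixed signature `Sg` assigning types to constants
    (a function, so each constant is declared at most once). -/
inductive Typ (Sg : ℕ → Option Ty) : Ctx → Ctx → Ctx → Tm → Ty → Prop
  | con {Γ Ω : Ctx} {c : ℕ} {A : Ty} :
      Sg c = some A → Typ Sg Γ Ω ∅ (.const c) A
  | idu {Γ Ω : Ctx} {x : ℕ} {A : Ty} :
      (x, A) ∈ Γ → Typ Sg Γ Ω ∅ (.fvar x) A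
  | id1 {Γ Ω : Ctx} {x : ℕ} {A : Ty} :
      Typ Sg Γ Ω {(x, A)} (.fvar x) A
  | lamu {Γ Ω Δ : Ctx} {x : ℕ} {A B : Ty} {M : Tm} :
      x ∉ Ctx.names (Γ ∪ Ω ∪ Δ) →
      Typ Sg (insert (x, A) Γ) Ω Δ (Tm.open0 M (.fvar x)) B →
      Typ Sg Γ Ω Δ (.lam .un A M) (.arr A .un B)
  | lam0 {Γ Ω Δ : Ctx} {x : ℕ} {A B : Ty} {M : Tm} :
      x ∉ Ctx.names (Γ ∪ Ω ∪ Δ) →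
      Typ Sg Γ (insert (x, A) Ω) Δ (Tm.open0 M (.fvar x)) B →
      Typ Sg Γ Ω Δ (.lam .zero A M) (.arr A .zero B)
  | lam1 {Γ Ω Δ : Ctx} {x : ℕ} {A B : Ty} {M : Tm} :
      x ∉ Ctx.names (Γ ∪ Ω ∪ Δ) →
      Typ Sg Γ Ω (insert (x, A) Δ) (Tm.open0 M (.fvar x)) B →
      Typ Sg Γ Ω Δ (.lam .one A M) (.arr A .one B)
  | appu {Γ Ω Δ : Ctx} {M N : Tm} {A B : Ty} :
      Typ Sg Γ Ω Δ M (.arr A .un B) →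
      Typ Sg (Γ ∪ Δ) Ω ∅ N A →
      Typ Sg Γ Ω Δ (.app M .un N) B
  | app0 {Γ Ω Δ : Ctx} {M N : Tm} {A B : Ty} :
      Typ Sg Γ Ω Δ M (.arr A .zero B) →
      Typ Sg (Γ ∪ Ω ∪ Δ) ∅ ∅ N A →
      Typ Sg Γ Ω Δ (.app M .zero N) B
  | app1 {Γ Ω ΔM ΔN : Ctx} {M N : Tm} {A B : Ty} :
      Disjoint ΔM ΔN →
      Typ Sg (Γ ∪ ΔN) Ω ΔM M (.arr A .one B) →
      Typ Sg (Γ ∪ ΔM) Ω ΔN N A →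
      Typ Sg Γ Ω (ΔM ∪ ΔN) (.app M .one N) B

/-- `x` occurs strictly in `M`: an occurrence not inside an irrelevant
    argument nor inside the argument of an unrestricted application. -/
def Strict (x : ℕ) : Tm → Prop
  | .const _ => False
  | .bvar _ => False
  | .fvar y => y = x
  | .lam _ _ M => Strict x M
  | .app M l N =>
      match l with
      | .one => Strict x M ∨ Strict x N
      | _ => Strict x M

lemma strict_openRec {x y : ℕ} (h : y ≠ x) (M : Tm) (k : ℕ) :
    Strict x (Tm.openRec k (.fvar y) M) ↔ Strict x M := by
  induction M generalizing k with
  | const c => simp [Tm.openRec, Strict]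
  | bvar i =>
      simp only [Tm.openRec]
      split <;> simp [Strict, h]
  | fvar z => simp [Tm.openRec, Strict]
  | lam l A M ih => simp [Tm.openRec, Strict, ih]
  | app M l N ihM ihN =>
      cases l <;> simp [Tm.openRec, Strict, ihM, ihN]

lemma mem_names_of_mem {Γ : Ctx} {x : ℕ} {A : Ty} (h : (x, A) ∈ Γ) :
    x ∈ Ctx.names Γ :=
  Finset.mem_image.mpr ⟨(x, A), h, rfl⟩

lemma names_union (Γ Δ : Ctx) :
    Ctx.names (Γ ∪ Δ) = Ctx.names Γ ∪ Ctx.names Δ :=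
  Finset.image_union _ _

/-- A strict hypothesis occurs strictly. -/
lemma strict_of_typ {Sg : ℕ → Option Ty} {Γ Ω Δ : Ctx} {M : Tm} {A : Ty}
    (h : Typ Sg Γ Ω Δ M A) : ∀ x C, (x, C) ∈ Δ → Strict x M := by
  induction h with
  | con _ => intro x C hx; simp at hx
  | idu _ => intro x C hx; simp at hx
  | id1 =>
      intro x C hx
      simp only [Finset.mem_singleton, Prod.mk.injEq] at hx
      simpa [Strict] using hx.1.symm
  | @lamu G Ω Δ y A B M hy _ ih =>
      intro x C hx
      have hxy : y ≠ x := by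
        rintro rfl
        exact hy (by simp [names_union, Finset.mem_union, mem_names_of_mem hx])
      show Strict x M
      exact (strict_openRec hxy M 0).mp (ih x C hx)
  | @lam0 G Ω Δ y A B M hy _ ih =>
      intro x C hx
      have hxy : y ≠ x := by
        rintro rfl
        exact hy (by simp [names_union, Finset.mem_union, mem_names_of_mem hx])
      show Strict x M
      exact (strict_openRec hxy M 0).mp (ih x C hx)
  | @lam1 G Ω Δ y A B M hy _ ih =>
      intro x C hx
      have hxy : y ≠ x := by
        rintro rfl
        exact hy (by simp [names_union, Finset.mem_union, mem_names_of_mem hx])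
      show Strict x M
      exact (strict_openRec hxy M 0).mp (ih x C (Finset.mem_insert_of_mem hx))
  | appu _ _ ihM _ =>
      intro x C hx
      exact ihM x C hx
  | app0 _ _ ihM _ =>
      intro x C hx
      exact ihM x C hx
  | app1 _ _ _ ihM ihN =>
      intro x C hx
      rcases Finset.mem_union.mp hx with h' | h'
      · exact Or.inl (ihM x C h')
      · exact Or.inr (ihN x C h')

/-- An irrelevant hypothesis (fresh for the other two zones) never occurs
    strictly. -/
lemma not_strict_of_typ {Sg : ℕ → Option Ty} {Γ Ω Δ : Ctx} {M : Tm} {A : Ty}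
    (h : Typ Sg Γ Ω Δ M A) :
    ∀ x, x ∈ Ctx.names Ω → x ∉ Ctx.names Γ → x ∉ Ctx.names Δ → ¬ Strict x M := by
  induction h with
  | con _ => intro x _ _ _ hS; exact hS
  | idu hm =>
      intro x _ hΓ _ hS
      simp only [Strict] at hS
      subst hS
      exact hΓ (mem_names_of_mem hm)
  | id1 =>
      intro x _ _ hΔ hS
      simp only [Strict] at hS
      subst hS
      exact hΔ (mem_names_of_mem (Finset.mem_singleton_self _))
  | @lamu G Ω Δ y A B M hy _ ih =>
      intro x hΩ hΓ hΔ hS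
      have hxy : y ≠ x := by
        rintro rfl
        exact hy (by simp [names_union, Finset.mem_union, hΩ])
      have hΓ' : x ∉ Ctx.names (insert (y, A) G) := by
        intro hmem
        rcases Finset.mem_image.mp hmem with ⟨p, hp, hpx⟩
        rcases Finset.mem_insert.mp hp with h' | h'
        · exact hxy (by rw [h'] at hpx; exact hpx)
        · exact hΓ (Finset.mem_image.mpr ⟨p, h', hpx⟩)
      exact ih x hΩ hΓ' hΔ ((strict_openRec hxy M 0).mpr (show Strict x M from hS))
  | @lam0 G Ω Δ y A B M hy _ ih =>
      intro x hΩ hΓ hΔ hS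
      have hxy : y ≠ x := by
        rintro rfl
        exact hy (by simp [names_union, Finset.mem_union, hΩ])
      have hΩ' : x ∈ Ctx.names (insert (y, A) Ω) :=
        Finset.image_subset_image (Finset.subset_insert _ _) hΩ
      exact ih x hΩ' hΓ hΔ ((strict_openRec hxy M 0).mpr (show Strict x M from hS))
  | @lam1 G Ω Δ y A B M hy _ ih =>
      intro x hΩ hΓ hΔ hS
      have hxy : y ≠ x := by
        rintro rfl
        exact hy (by simp [names_union, Finset.mem_union, hΩ])
      have hΔ' : x ∉ Ctx.names (insert (y, A) Δ) := by
        intro hmem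
        rcases Finset.mem_image.mp hmem with ⟨p, hp, hpx⟩
        rcases Finset.mem_insert.mp hp with h' | h'
        · exact hxy (by rw [h'] at hpx; exact hpx)
        · exact hΔ (Finset.mem_image.mpr ⟨p, h', hpx⟩)
      exact ih x hΩ hΓ hΔ' ((strict_openRec hxy M 0).mpr (show Strict x M from hS))
  | appu _ _ ihM _ =>
      intro x hΩ hΓ hΔ hS
      exact ihM x hΩ hΓ hΔ hS
  | app0 _ _ ihM _ =>
      intro x hΩ hΓ hΔ hS
      exact ihM x hΩ hΓ hΔ hS
  | app1 _ _ _ ihM ihN =>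
      intro x hΩ hΓ hΔ hS
      rw [names_union] at hΔ
      simp only [Finset.mem_union, not_or] at hΔ
      rcases hS with hS | hS
      · exact ihM x hΩ (by rw [names_union]; simp [hΓ, hΔ.2]) hΔ.1 hS
      · exact ihN x hΩ (by rw [names_union]; simp [hΓ, hΔ.1]) hΔ.2 hS

/-- **Exclusivity.**  It is not the case that both
    `Γ₁; Ω₁; (Δ₁, x:C) ⊢ M : A` and `Γ₂; (Ω₂, x:C); Δ₂ ⊢ M : A` are
    derivable: no term can be typed both with `x` as a strict hypothesis and
    with `x` as an irrelevant hypothesis.  (The freshness hypotheses express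
    the standing convention that each context declares `x` at most once.) -/
theorem exclusivity (Sg : ℕ → Option Ty)
    (Γ₁ Ω₁ Δ₁ Γ₂ Ω₂ Δ₂ : Ctx) (x : ℕ) (C : Ty) (M : Tm) (A : Ty)
    (h₁ : x ∉ Ctx.names (Γ₁ ∪ Ω₁ ∪ Δ₁)) (h₂ : x ∉ Ctx.names (Γ₂ ∪ Ω₂ ∪ Δ₂)) :
    ¬ (Typ Sg Γ₁ Ω₁ (insert (x, C) Δ₁) M A ∧
       Typ Sg Γ₂ (insert (x, C) Ω₂) Δ₂ M A) := by
  rintro ⟨hd₁, hd₂⟩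
  have hS : Strict x M :=
    strict_of_typ hd₁ x C (Finset.mem_insert_self _ _)
  rw [names_union, names_union] at h₂
  simp only [Finset.mem_union, not_or] at h₂
  exact not_strict_of_typ hd₂ x
    (mem_names_of_mem (Finset.mem_insert_self (x, C) Ω₂))
    h₂.1.1 h₂.2 hS
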